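/- For fixed t₂, if t₁ ↦ h₁^Y(t₁,t₂) is increasing in t₁, then H^w_{X,Y}(t₁,t₂) ≤ −m_X(t₁,t₂) ln h₁^Y(t₁,t₂) − ∫_{t₁}^{t₂} [x f(x)/(F(t₂)−F(t₁))] ln[(G(t₂)−G(x))/(G(t₂)−G(t₁))] dx. -/

import Mathlib

open MeasureTheory Real

/-- Interval inaccuracy measure H_{X,Y}(t₁,t₂). -/
noncomputable def inacc (f F g G : ℝ → ℝ) (t₁ t₂ : ℝ) : ℝ :=
  -∫ x in t₁..t₂, f x / (F t₂ - F t₁) * Real.log (g x / (G t₂ - G t₁))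

/-- Weighted interval inaccuracy measure H^w_{X,Y}(t₁,t₂). -/
noncomputable def wInacc (f F g G : ℝ → ℝ) (t₁ t₂ : ℝ) : ℝ :=
  -∫ x in t₁..t₂, x * (f x / (F t₂ - F t₁)) * Real.log (g x / (G t₂ - G t₁))

/-- General conditional mean m_X(t₁,t₂) = E(X | t₁ < X < t₂). -/
noncomputable def gcm (f F : ℝ → ℝ) (t₁ t₂ : ℝ) : ℝ :=
  (∫ x in t₁..t₂, x * f x) / (F t₂ - F t₁)
/-- First generalized failure rate h₁(t₁,t₂) = g(t₁)/(G(t₂)-G(t₁)). -/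
noncomputable def gfr₁ (g G : ℝ → ℝ) (t₁ t₂ : ℝ) : ℝ := g t₁ / (G t₂ - G t₁)

/-- Second generalized failure rate h₂(t₁,t₂) = g(t₂)/(G(t₂)-G(t₁)). -/
noncomputable def gfr₂ (g G : ℝ → ℝ) (t₁ t₂ : ℝ) : ℝ := g t₂ / (G t₂ - G t₁)


open Set Filter Topology

lemma slope_eq' (G : ℝ → ℝ) (t₂ x : ℝ) (hx : x ≠ t₂) :
    slope G t₂ x = (G t₂ - G x) / (t₂ - x) := by
  rw [slope_def_field]
  rw [div_eq_div_iff (sub_ne_zero.2 hx) (sub_ne_zero.2 (Ne.symm hx))]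
  ring

-- integrability of an everywhere-derivative that is nonneg on an interval
lemma integrableOn_deriv_of_monotone (G g : ℝ → ℝ) (hG : ∀ x, HasDerivAt G (g x) x)
    {a b : ℝ} (hab : a ≤ b) (hg0 : ∀ x ∈ Ioo a b, 0 ≤ g x) :
    IntegrableOn g (Ioc a b) := by
  have hGd : Differentiable ℝ G := fun x => (hG x).differentiableAt
  have hGmono : MonotoneOn G (Icc a b) := by
    apply monotoneOn_of_deriv_nonneg (convex_Icc a b) hGd.continuous.continuousOn
      (hGd.differentiableOn.mono interior_subset)
    intro x hx
    rw [interior_Icc] at hx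
    rw [(hG x).deriv]; exact hg0 x hx
  set Gc : ℝ → ℝ := fun x => G (min (max x a) b) with hGc
  have hclamp : ∀ x, min (max x a) b ∈ Icc a b :=
    fun x => ⟨le_min (le_max_right x a) hab, min_le_right _ _⟩
  have hmono : Monotone Gc := by
    intro x y hxy
    exact hGmono (hclamp x) (hclamp y) (min_le_min (max_le_max hxy le_rfl) le_rfl)
  have hGcG : ∀ x ∈ Ioo a b, HasDerivAt Gc (g x) x := by
    intro x hx
    apply (hG x).congr_of_eventuallyEq
    filter_upwards [isOpen_Ioo.mem_nhds hx] with y hy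
    simp only [hGc, max_eq_left hy.1.le, min_eq_left hy.2.le]
  set r : ℝ → ℝ := fun x => (Measure.rnDeriv hmono.stieltjesFunction.measure volume x).toReal
    with hr
  have hint : IntegrableOn r (Ioo a b) := by
    apply IntegrableOn.mono_set (t := Ioc a b) _ Ioo_subset_Ioc_self
    apply integrable_toReal_of_lintegral_ne_top
    · exact (Measure.measurable_rnDeriv _ _).aemeasurable
    · have := Measure.lintegral_rnDeriv_lt_top_of_measure_ne_top
        (μ := hmono.stieltjesFunction.measure) volume (s := Ioc a b)
        ((measure_mono Ioc_subset_Icc_self).trans_lt (isCompact_Icc.measure_lt_top)).ne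
      exact this.ne
  have hae : ∀ᵐ x, x ∈ Ioo a b → g x = r x := by
    filter_upwards [hmono.ae_hasDerivAt] with x hx hxI
    exact (hGcG x hxI).unique hx
  rw [integrableOn_Ioc_iff_integrableOn_Ioo]
  apply hint.congr
  exact ((ae_restrict_iff' measurableSet_Ioo).mpr (hae.mono fun x h hx => (h hx).symm))

lemma integral_deriv_of_monotone (G g : ℝ → ℝ) (hG : ∀ x, HasDerivAt G (g x) x)
    {a b : ℝ} (hab : a ≤ b) (hg0 : ∀ x ∈ Ioo a b, 0 ≤ g x) :
    ∫ x in a..b, g x = G b - G a :=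
  intervalIntegral.integral_eq_sub_of_hasDerivAt (fun x _ => hG x)
    ((intervalIntegrable_iff_integrableOn_Ioc_of_le hab).2
      (integrableOn_deriv_of_monotone G g hG hab hg0))

lemma slope_lower (G : ℝ → ℝ) (d t₁ t₂ : ℝ) (h : t₁ < t₂)
    (hd : HasDerivAt G d t₂) (hpos : 0 < d)
    (hmono : MonotoneOn G (Icc t₁ t₂)) (hst : ∀ x ∈ Ico t₁ t₂, G x < G t₂) :
    ∃ ε > 0, ∀ x ∈ Ico t₁ t₂, ε * (t₂ - x) ≤ G t₂ - G x := by
  have hslope := hasDerivAt_iff_tendsto_slope.mp hd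
  have hev : ∀ᶠ x in 𝓝[<] t₂, d / 2 < slope G t₂ x :=
    (hslope.mono_left (nhdsWithin_mono t₂ (fun x hx => ne_of_lt hx))).eventually_const_lt
      (half_lt_self hpos)
  obtain ⟨a, ha, haS⟩ := mem_nhdsLT_iff_exists_Ioo_subset.mp hev
  set b := max t₁ a with hb
  have hbI : b ∈ Ico t₁ t₂ := ⟨le_max_left _ _, max_lt h ha⟩
  have hm : 0 < G t₂ - G b := sub_pos.2 (hst b hbI)
  refine ⟨min (d / 2) ((G t₂ - G b) / (t₂ - t₁)), lt_min (half_pos hpos) (div_pos hm (by linarith)), ?_⟩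
  intro x hx
  rcases le_or_gt x b with hxb | hbx
  · have h1 : G x ≤ G b := hmono ⟨hx.1, hx.2.le⟩ ⟨hbI.1, hbI.2.le⟩ hxb
    calc min (d / 2) ((G t₂ - G b) / (t₂ - t₁)) * (t₂ - x)
        ≤ (G t₂ - G b) / (t₂ - t₁) * (t₂ - x) :=
          mul_le_mul_of_nonneg_right (min_le_right _ _) (by linarith [hx.2])
      _ ≤ (G t₂ - G b) / (t₂ - t₁) * (t₂ - t₁) :=
          mul_le_mul_of_nonneg_left (by linarith [hx.1]) (le_of_lt (div_pos hm (by linarith)))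
      _ = G t₂ - G b := div_mul_cancel₀ _ (by linarith : t₂ - t₁ ≠ 0)
      _ ≤ G t₂ - G x := by linarith
  · have hxa : x ∈ Ioo a t₂ := ⟨lt_of_le_of_lt (le_max_right t₁ a) hbx, hx.2⟩
    have h3 := haS hxa
    simp only [Set.mem_setOf_eq] at h3
    rw [slope_eq' G t₂ x (ne_of_lt hx.2)] at h3
    have h2 : d / 2 * (t₂ - x) ≤ G t₂ - G x := by
      rw [lt_div_iff₀ (by linarith [hx.2] : (0:ℝ) < t₂ - x)] at h3
      linarith
    calc min (d / 2) ((G t₂ - G b) / (t₂ - t₁)) * (t₂ - x)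
        ≤ d / 2 * (t₂ - x) := mul_le_mul_of_nonneg_right (min_le_left _ _) (by linarith [hx.2])
      _ ≤ G t₂ - G x := h2

lemma slope_upper (G : ℝ → ℝ) (d t₁ t₂ : ℝ) (h : t₁ < t₂)
    (hd : HasDerivAt G d t₂)
    (hmono : MonotoneOn G (Icc t₁ t₂)) :
    ∃ L > 0, ∀ x ∈ Icc t₁ t₂, G t₂ - G x ≤ L * (t₂ - x) := by
  have hslope := hasDerivAt_iff_tendsto_slope.mp hd
  have hev : ∀ᶠ x in 𝓝[<] t₂, slope G t₂ x < d + 1 :=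
    (hslope.mono_left (nhdsWithin_mono t₂ (fun x hx => ne_of_lt hx))).eventually_lt_const
      (by linarith)
  obtain ⟨a, ha, haS⟩ := mem_nhdsLT_iff_exists_Ioo_subset.mp hev
  set b := max t₁ a with hb
  have hbI : b ∈ Ico t₁ t₂ := ⟨le_max_left _ _, max_lt h ha⟩
  have hGb : G t₁ ≤ G b := hmono ⟨le_refl _, h.le⟩ ⟨hbI.1, hbI.2.le⟩ hbI.1
  have hm : 0 ≤ G t₂ - G t₁ := by
    have := hmono (⟨le_refl _, h.le⟩ : t₁ ∈ Icc t₁ t₂) ⟨h.le, le_refl _⟩ h.le; linarith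
  refine ⟨max (max (d + 1) ((G t₂ - G t₁) / (t₂ - b))) 1,
    lt_of_lt_of_le one_pos (le_max_right _ _), ?_⟩
  set L := max (max (d + 1) ((G t₂ - G t₁) / (t₂ - b))) 1 with hL
  have hLd : d + 1 ≤ L := (le_max_left _ _).trans (le_max_left _ _)
  have hLr : (G t₂ - G t₁) / (t₂ - b) ≤ L := (le_max_right _ _).trans (le_max_left _ _)
  have hLpos : (0:ℝ) < L := lt_of_lt_of_le one_pos (le_max_right _ _)
  intro x hx
  rcases eq_or_lt_of_le hx.2 with rfl | hxt
  · simp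
  rcases le_or_gt x b with hxb | hbx
  · have h1 : G t₁ ≤ G x := hmono ⟨le_refl _, h.le⟩ ⟨hx.1, hxt.le⟩ hx.1
    have h2 : t₂ - b ≤ t₂ - x := by linarith
    calc G t₂ - G x ≤ G t₂ - G t₁ := by linarith
      _ = (G t₂ - G t₁) / (t₂ - b) * (t₂ - b) :=
          (div_mul_cancel₀ _ (by linarith [hbI.2] : t₂ - b ≠ 0)).symm
      _ ≤ L * (t₂ - x) :=
          mul_le_mul hLr h2 (by linarith [hbI.2]) hLpos.le
  · have hxa : x ∈ Ioo a t₂ := ⟨lt_of_le_of_lt (le_max_right t₁ a) hbx, hxt⟩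
    have h3 := haS hxa
    simp only [Set.mem_setOf_eq] at h3
    rw [slope_eq' G t₂ x (ne_of_lt hxt)] at h3
    rw [div_lt_iff₀ (by linarith : (0:ℝ) < t₂ - x)] at h3
    calc G t₂ - G x ≤ (d + 1) * (t₂ - x) := h3.le
      _ ≤ L * (t₂ - x) := mul_le_mul_of_nonneg_right hLd (by linarith)

set_option maxHeartbeats 2000000 in
theorem stmt8 (f F g G : ℝ → ℝ) (t₁ t₂ : ℝ)
    (ht₁ : 0 < t₁) (ht : t₁ < t₂)
    (hD : F t₁ < F t₂ ∧ G t₁ < G t₂)              -- (t₁,t₂) ∈ D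
    (hF : ∀ x, HasDerivAt F (f x) x) (hG : ∀ x, HasDerivAt G (g x) x)
    (hfpos : ∀ x, 0 ≤ f x) (hgpos : ∀ x, 0 < x → 0 < g x)
    -- for fixed t₂, h₁^Y(·,t₂) is increasing in t₁ on (0,t₂)
    (hinc : MonotoneOn (fun s => gfr₁ g G s t₂) (Set.Ioo 0 t₂)) :
    wInacc f F g G t₁ t₂ ≤
      -gcm f F t₁ t₂ * Real.log (gfr₁ g G t₁ t₂)
        - ∫ x in t₁..t₂, x * f x / (F t₂ - F t₁)
            * Real.log ((G t₂ - G x) / (G t₂ - G t₁)) := by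
  have h0t₂ : (0:ℝ) < t₂ := ht₁.trans ht
  have hT : (0:ℝ) < t₂ - t₁ := by linarith
  have hΔF : (0:ℝ) < F t₂ - F t₁ := sub_pos.2 hD.1
  have hΔG : (0:ℝ) < G t₂ - G t₁ := sub_pos.2 hD.2
  set ΔF := F t₂ - F t₁ with hΔF_def
  set ΔG := G t₂ - G t₁ with hΔG_def
  -- measurability
  have hfm : Measurable f := by
    have : f = deriv F := funext fun x => ((hF x).deriv).symm
    rw [this]; exact measurable_deriv F
  have hgm : Measurable g := by
    have : g = deriv G := funext fun x => ((hG x).deriv).symm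
    rw [this]; exact measurable_deriv G
  have hFcont : Continuous F :=
    (Differentiable.continuous fun x => (hF x).differentiableAt)
  have hGcont : Continuous G :=
    (Differentiable.continuous fun x => (hG x).differentiableAt)
  have hFmono : Monotone F := by
    apply monotone_of_deriv_nonneg (fun x => (hF x).differentiableAt)
    intro x; rw [(hF x).deriv]; exact hfpos x
  have hGsm : StrictMonoOn G (Icc t₁ t₂) := by
    apply strictMonoOn_of_deriv_pos (convex_Icc t₁ t₂) hGcont.continuousOn
    intro x hx
    rw [interior_Icc] at hx
    rw [(hG x).deriv]; exact hgpos x (ht₁.trans hx.1)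
  have hGmonoI : MonotoneOn G (Icc t₁ t₂) := hGsm.monotoneOn
  have hGst : ∀ x ∈ Ico t₁ t₂, G x < G t₂ :=
    fun x hx => hGsm ⟨hx.1, hx.2.le⟩ ⟨ht.le, le_refl _⟩ hx.2
  have hu_pos : ∀ x ∈ Ico t₁ t₂, 0 < G t₂ - G x := fun x hx => sub_pos.2 (hGst x hx)
  obtain ⟨ε, hε, hεb⟩ := slope_lower G (g t₂) t₁ t₂ ht (hG t₂) (hgpos t₂ h0t₂) hGmonoI hGst
  obtain ⟨LG, hLG, hLGb⟩ := slope_upper G (g t₂) t₁ t₂ ht (hG t₂) hGmonoI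
  obtain ⟨LF, hLF, hLFb⟩ := slope_upper F (f t₂) t₁ t₂ ht (hF t₂) (hFmono.monotoneOn _)
  -- integrability of f and g pieces
  have hfint : IntegrableOn f (Ioc t₁ t₂) :=
    integrableOn_deriv_of_monotone F f hF ht.le (fun x _ => hfpos x)
  have hgeq : ∀ y s, t₁ ≤ y → y ≤ s → s ≤ t₂ → (∫ x in y..s, g x) = G s - G y := by
    intro y s hy hys hst
    exact integral_deriv_of_monotone G g hG hys
      (fun x hx => (hgpos x (lt_of_lt_of_le ht₁ (hy.trans hx.1.le))).le)
  -- the failure-rate comparison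
  set c := g t₁ / ΔG with hc_def
  have hc : 0 < c := div_pos (hgpos t₁ ht₁) hΔG
  have hcu : ∀ x ∈ Ico t₁ t₂, c * (G t₂ - G x) ≤ g x := by
    intro x hx
    have h1 : gfr₁ g G t₁ t₂ ≤ gfr₁ g G x t₂ :=
      hinc ⟨ht₁, ht⟩ ⟨ht₁.trans_le hx.1, hx.2⟩ hx.1
    simp only [gfr₁] at h1
    rw [← hΔG_def] at h1
    exact (le_div_iff₀ (hu_pos x hx)).1 h1
  -- upper bound on g near t₂
  set C := 4 * ΔG * LG / ε with hC_def
  have hC : 0 < C := by positivity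
  have hgub : ∀ y ∈ Ico t₁ t₂, g y ≤ C / (t₂ - y) := by
    intro y hy
    have hyt : 0 < t₂ - y := by linarith [hy.2]
    set s := (y + t₂) / 2 with hs_def
    have hys : y < s := by simp only [hs_def]; linarith
    have hst2 : s < t₂ := by simp only [hs_def]; linarith
    have hsI : s ∈ Ico t₁ t₂ := ⟨le_trans hy.1 hys.le, hst2⟩
    have hus : 0 < G t₂ - G s := hu_pos s hsI
    have huy : 0 < G t₂ - G y := hu_pos y hy
    have hgy : 0 < g y := hgpos y (ht₁.trans_le hy.1)
    -- pointwise lower bound on g on [y,s]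
    have hptw : ∀ x ∈ Icc y s, g y / (G t₂ - G y) * (G t₂ - G s) ≤ g x := by
      intro x hx
      have hxI : x ∈ Ico t₁ t₂ := ⟨le_trans hy.1 hx.1, lt_of_le_of_lt hx.2 hst2⟩
      have hux : 0 < G t₂ - G x := hu_pos x hxI
      have h1 : gfr₁ g G y t₂ ≤ gfr₁ g G x t₂ :=
        hinc ⟨ht₁.trans_le hy.1, hy.2⟩ ⟨ht₁.trans_le hxI.1, hxI.2⟩ hx.1
      simp only [gfr₁] at h1
      have h2 : G t₂ - G s ≤ G t₂ - G x := by
        have := hGmonoI ⟨hxI.1, hxI.2.le⟩ ⟨hsI.1, hsI.2.le⟩ hx.2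
        linarith
      calc g y / (G t₂ - G y) * (G t₂ - G s)
          ≤ g y / (G t₂ - G y) * (G t₂ - G x) :=
            mul_le_mul_of_nonneg_left h2 (by positivity)
        _ ≤ g x / (G t₂ - G x) * (G t₂ - G x) :=
            mul_le_mul_of_nonneg_right h1 hux.le
        _ = g x := div_mul_cancel₀ _ hux.ne'
    have hgint : IntervalIntegrable g volume y s :=
      (intervalIntegrable_iff_integrableOn_Ioc_of_le hys.le).2
        (integrableOn_deriv_of_monotone G g hG hys.le
          (fun x hx => (hgpos x (ht₁.trans (lt_of_le_of_lt hy.1 hx.1))).le))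
    have hmono_int : (s - y) * (g y / (G t₂ - G y) * (G t₂ - G s)) ≤ G s - G y := by
      have h3 : (∫ _x in y..s, g y / (G t₂ - G y) * (G t₂ - G s)) ≤ ∫ x in y..s, g x :=
        intervalIntegral.integral_mono_on hys.le intervalIntegrable_const hgint hptw
      rw [intervalIntegral.integral_const, smul_eq_mul] at h3
      rw [hgeq y s hy.1 hys.le hst2.le] at h3
      exact h3
    -- now extract the bound
    have huyU : G t₂ - G y ≤ LG * (t₂ - y) := hLGb y ⟨hy.1, hy.2.le⟩
    have huyD : G t₂ - G y ≤ ΔG := by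
      have := hGmonoI ⟨le_refl _, ht.le⟩ ⟨hy.1, hy.2.le⟩ hy.1
      rw [hΔG_def]; linarith
    have husL : ε * (t₂ - s) ≤ G t₂ - G s := hεb s hsI
    have hsy : s - y = (t₂ - y) / 2 := by simp only [hs_def]; ring
    have hts : t₂ - s = (t₂ - y) / 2 := by simp only [hs_def]; ring
    rw [le_div_iff₀ hyt, hC_def, le_div_iff₀ hε]
    -- goal : g y * (t₂ - y) * ε ≤ 4 * ΔG * LG
    have e1 : g y = g y / (G t₂ - G y) * (G t₂ - G y) := (div_mul_cancel₀ _ huy.ne').symm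
    set P := g y / (G t₂ - G y) with hP
    have hP0 : 0 ≤ P := by positivity
    have h4 : ε * ((t₂ - y) / 2) ≤ G t₂ - G s := by rw [← hts]; exact husL
    have key : (t₂ - y) / 2 * (P * (ε * ((t₂ - y) / 2))) ≤ G t₂ - G y := by
      calc (t₂ - y) / 2 * (P * (ε * ((t₂ - y) / 2)))
          ≤ (t₂ - y) / 2 * (P * (G t₂ - G s)) :=
            mul_le_mul_of_nonneg_left (mul_le_mul_of_nonneg_left h4 hP0) (by linarith)
        _ = (s - y) * (P * (G t₂ - G s)) := by rw [hsy]
        _ ≤ G s - G y := hmono_int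
        _ ≤ G t₂ - G y := by
            have := hGmonoI ⟨hy.1, hy.2.le⟩ ⟨hsI.1, hsI.2.le⟩ hys.le
            linarith [hus]
    calc g y * (t₂ - y) * ε = P * (G t₂ - G y) * (t₂ - y) * ε := by rw [← e1]
      _ ≤ P * (LG * (t₂ - y)) * (t₂ - y) * ε :=
          mul_le_mul_of_nonneg_right (mul_le_mul_of_nonneg_right
            (mul_le_mul_of_nonneg_left huyU hP0) (by linarith)) hε.le
      _ = 4 * LG * ((t₂ - y) / 2 * (P * (ε * ((t₂ - y) / 2)))) := by ring
      _ ≤ 4 * LG * (G t₂ - G y) := mul_le_mul_of_nonneg_left key (by positivity)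
      _ ≤ 4 * ΔG * LG := by nlinarith [mul_le_mul_of_nonneg_left huyD (by positivity : (0:ℝ) ≤ 4 * LG)]
  -- the logarithmic weight W
  set W : ℝ → ℝ := fun x => Real.log (t₂ - t₁) - Real.log (t₂ - x) with hW_def
  have hWm : Measurable W :=
    measurable_const.sub (Real.measurable_log.comp (measurable_const.sub measurable_id))
  have hW0 : ∀ x ∈ Ico t₁ t₂, 0 ≤ W x := by
    intro x hx
    have : (0:ℝ) < t₂ - x := by linarith [hx.2]
    simp only [hW_def, sub_nonneg]
    exact Real.log_le_log this (by linarith [hx.1])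
  have hWderiv : ∀ x, x < t₂ → HasDerivAt W (t₂ - x)⁻¹ x := by
    intro x hx
    have h1 : HasDerivAt (fun y : ℝ => t₂ - y) (-1) x := by
      simpa using (hasDerivAt_id x).const_sub t₂
    have h2 : HasDerivAt (fun y : ℝ => Real.log (t₂ - y)) (-(t₂ - x)⁻¹) x := by
      have := (Real.hasDerivAt_log (by linarith : t₂ - x ≠ 0)).comp x h1
      rw [mul_neg_one] at this
      exact this
    have h3 := (hasDerivAt_const x (Real.log (t₂ - t₁))).sub h2
    rw [zero_sub, neg_neg] at h3
    exact h3
  have hWcont : ∀ s, s < t₂ → ContinuousOn W (Icc t₁ s) := by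
    intro s hs
    intro x hx
    exact ((hWderiv x (lt_of_le_of_lt hx.2 hs)).differentiableAt.continuousAt).continuousWithinAt
  have hfWint : ∀ s ∈ Ico t₁ t₂, IntegrableOn (fun x => f x * W x) (Ioc t₁ s) := by
    intro s hs
    apply IntegrableOn.mono_set (t := Icc t₁ s) _ Ioc_subset_Icc_self
    exact IntegrableOn.mul_continuousOn
      ((integrableOn_Icc_iff_integrableOn_Ioc (by finiteness)).2 (hfint.mono_set (Ioc_subset_Ioc le_rfl hs.2.le)))
      (hWcont s hs.2) isCompact_Icc
  have hbd : ∀ s ∈ Ico t₁ t₂, (∫ x in t₁..s, f x * W x) ≤ LF * (t₂ - t₁) := by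
    intro s hs
    set φ : ℝ → ℝ := fun x => (F x - F t₂) * W x with hφ_def
    set ψ : ℝ → ℝ := fun x => f x * W x + (F x - F t₂) * (t₂ - x)⁻¹ with hψ_def
    have hφ' : ∀ x ∈ uIcc t₁ s, HasDerivAt φ (ψ x) x := by
      intro x hx
      rw [uIcc_of_le hs.1] at hx
      exact ((hF x).sub_const (F t₂)).mul (hWderiv x (lt_of_le_of_lt hx.2 hs.2))
    have hrat_cont : ContinuousOn (fun x => (F x - F t₂) * (t₂ - x)⁻¹) (uIcc t₁ s) := by
      rw [uIcc_of_le hs.1]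
      apply ContinuousOn.mul ((hFcont.continuousOn).sub continuousOn_const)
      exact ContinuousOn.inv₀ ((continuous_const.sub continuous_id).continuousOn)
        (fun x hx => sub_ne_zero.2 (ne_of_gt (lt_of_le_of_lt hx.2 hs.2)))
    have hfWii : IntervalIntegrable (fun x => f x * W x) volume t₁ s :=
      (intervalIntegrable_iff_integrableOn_Ioc_of_le hs.1).2 (hfWint s hs)
    have hratii : IntervalIntegrable (fun x => (F x - F t₂) * (t₂ - x)⁻¹) volume t₁ s :=
      hrat_cont.intervalIntegrable
    have hψii : IntervalIntegrable ψ volume t₁ s := hfWii.add hratii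
    have hFTC : (∫ x in t₁..s, ψ x) = φ s - φ t₁ :=
      intervalIntegral.integral_eq_sub_of_hasDerivAt hφ' hψii
    have hφt₁ : φ t₁ = 0 := by simp only [hφ_def, hW_def, sub_self, mul_zero]
    have hsplit : (∫ x in t₁..s, ψ x)
        = (∫ x in t₁..s, f x * W x) + ∫ x in t₁..s, (F x - F t₂) * (t₂ - x)⁻¹ :=
      intervalIntegral.integral_add hfWii hratii
    have hφs : φ s ≤ 0 := by
      apply mul_nonpos_of_nonpos_of_nonneg
      · have := hFmono hs.2.le; linarith
      · exact hW0 s hs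
    have hrat_bd : (∫ x in t₁..s, -((F x - F t₂) * (t₂ - x)⁻¹)) ≤ LF * (s - t₁) := by
      have h5 : ∀ x ∈ Icc t₁ s, -((F x - F t₂) * (t₂ - x)⁻¹) ≤ LF := by
        intro x hx
        have hxt : (0:ℝ) < t₂ - x := by linarith [lt_of_le_of_lt hx.2 hs.2]
        have h6 : F t₂ - F x ≤ LF * (t₂ - x) := hLFb x ⟨hx.1, by linarith [hx.2, hs.2]⟩
        have : -((F x - F t₂) * (t₂ - x)⁻¹) = (F t₂ - F x) / (t₂ - x) := by ring
        rw [this, div_le_iff₀ hxt]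
        linarith
      have h7 : (∫ x in t₁..s, -((F x - F t₂) * (t₂ - x)⁻¹)) ≤ ∫ _x in t₁..s, LF :=
        intervalIntegral.integral_mono_on hs.1 hratii.neg intervalIntegrable_const h5
      rw [intervalIntegral.integral_const, smul_eq_mul] at h7
      linarith [h7]
    have hneg : (∫ x in t₁..s, -((F x - F t₂) * (t₂ - x)⁻¹))
        = -∫ x in t₁..s, (F x - F t₂) * (t₂ - x)⁻¹ := intervalIntegral.integral_neg
    have : (∫ x in t₁..s, f x * W x)
        = φ s - φ t₁ - ∫ x in t₁..s, (F x - F t₂) * (t₂ - x)⁻¹ := by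
      rw [← hFTC, hsplit]; ring
    rw [this, hφt₁]
    have hst : s - t₁ ≤ t₂ - t₁ := by linarith [hs.2]
    have := hrat_bd
    rw [hneg] at this
    nlinarith [mul_le_mul_of_nonneg_left hst hLF.le]
  -- global integrability of f * W on (t₁, t₂]
  have hfW : IntegrableOn (fun x => f x * W x) (Ioc t₁ t₂) := by
    set b : ℕ → ℝ := fun n => t₂ - (t₂ - t₁) / (n + 1) with hb_def
    have hbI : ∀ n, b n ∈ Ico t₁ t₂ := by
      intro n
      have h1 : (0:ℝ) < (n:ℝ) + 1 := by positivity
      have h2 : (t₂ - t₁) / ((n:ℝ) + 1) ≤ t₂ - t₁ := by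
        rw [div_le_iff₀ h1]; nlinarith [hT]
      have h3 : (0:ℝ) < (t₂ - t₁) / ((n:ℝ) + 1) := by positivity
      exact ⟨by simp only [hb_def]; linarith, by simp only [hb_def]; linarith⟩
    have hbt : Tendsto b atTop (𝓝 t₂) := by
      have h0 := tendsto_one_div_add_atTop_nhds_zero_nat.const_mul (t₂ - t₁)
      rw [mul_zero] at h0
      have h1 := tendsto_const_nhds.sub (f := fun _ : ℕ => t₂) h0
      rw [sub_zero] at h1
      apply h1.congr
      intro n
      simp only [hb_def, mul_one_div]
    apply integrableOn_Ioc_of_intervalIntegral_norm_bounded_right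
      (I := LF * (t₂ - t₁)) (fun n => hfWint (b n) (hbI n)) hbt
    apply Eventually.of_forall
    intro n
    have hE : ∀ x ∈ Ioc t₁ (b n), ‖f x * W x‖ = f x * W x := by
      intro x hx
      have hxI : x ∈ Ico t₁ t₂ := ⟨hx.1.le, lt_of_le_of_lt hx.2 (hbI n).2⟩
      rw [Real.norm_eq_abs, abs_of_nonneg (mul_nonneg (hfpos x) (hW0 x hxI))]
    calc (∫ x in Ioc t₁ (b n), ‖f x * W x‖)
        = ∫ x in Ioc t₁ (b n), f x * W x := setIntegral_congr_fun measurableSet_Ioc hE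
      _ = ∫ x in t₁..(b n), f x * W x := (intervalIntegral.integral_of_le (hbI n).1).symm
      _ ≤ LF * (t₂ - t₁) := hbd (b n) (hbI n)
  -- log bounds
  set K₁ := max (Real.log C - Real.log ΔG - Real.log (t₂ - t₁))
    (Real.log ΔG - Real.log c - Real.log ε - Real.log (t₂ - t₁)) with hK₁_def
  set K₂ := max (Real.log LG - Real.log ΔG + Real.log (t₂ - t₁))
    (Real.log ΔG - Real.log ε - Real.log (t₂ - t₁)) with hK₂_def
  set K := max K₁ K₂ with hK_def
  have hK₁K : K₁ ≤ K := le_max_left _ _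
  have hK₂K : K₂ ≤ K := le_max_right _ _
  have hlog_g : ∀ x ∈ Ioo t₁ t₂, |Real.log (g x / ΔG)| ≤ K₁ + W x := by
    intro x hx
    have htx : (0:ℝ) < t₂ - x := by linarith [hx.2]
    have hgx : 0 < g x := hgpos x (ht₁.trans hx.1)
    have hWx : W x = Real.log (t₂ - t₁) - Real.log (t₂ - x) := rfl
    have hub : Real.log (g x / ΔG) ≤ K₁ + W x := by
      have h1 : Real.log (g x) ≤ Real.log (C / (t₂ - x)) :=
        Real.log_le_log hgx (hgub x ⟨hx.1.le, hx.2⟩)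
      rw [Real.log_div hC.ne' htx.ne'] at h1
      rw [Real.log_div hgx.ne' hΔG.ne']
      have h2 : Real.log C - Real.log ΔG - Real.log (t₂ - t₁) ≤ K₁ := le_max_left _ _
      linarith
    have hlb : -(K₁ + W x) ≤ Real.log (g x / ΔG) := by
      have h1 : c * (ε * (t₂ - x)) ≤ g x := by
        calc c * (ε * (t₂ - x)) ≤ c * (G t₂ - G x) :=
              mul_le_mul_of_nonneg_left (hεb x ⟨hx.1.le, hx.2⟩) hc.le
          _ ≤ g x := hcu x ⟨hx.1.le, hx.2⟩
      have h2 : Real.log (c * (ε * (t₂ - x))) ≤ Real.log (g x) :=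
        Real.log_le_log (by positivity) h1
      rw [Real.log_mul hc.ne' (by positivity), Real.log_mul hε.ne' htx.ne'] at h2
      rw [Real.log_div hgx.ne' hΔG.ne']
      have h3 : Real.log ΔG - Real.log c - Real.log ε - Real.log (t₂ - t₁) ≤ K₁ := le_max_right _ _
      linarith
    exact abs_le.2 ⟨hlb, hub⟩
  have hlog_u : ∀ x ∈ Ioo t₁ t₂, |Real.log ((G t₂ - G x) / ΔG)| ≤ K₂ + W x := by
    intro x hx
    have htx : (0:ℝ) < t₂ - x := by linarith [hx.2]
    have hux : 0 < G t₂ - G x := hu_pos x ⟨hx.1.le, hx.2⟩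
    have hW0x : 0 ≤ W x := hW0 x ⟨hx.1.le, hx.2⟩
    have hub : Real.log ((G t₂ - G x) / ΔG) ≤ K₂ + W x := by
      have h1 : Real.log (G t₂ - G x) ≤ Real.log (LG * (t₂ - x)) :=
        Real.log_le_log hux (hLGb x ⟨hx.1.le, hx.2.le⟩)
      rw [Real.log_mul hLG.ne' htx.ne'] at h1
      rw [Real.log_div hux.ne' hΔG.ne']
      have h2 : Real.log LG - Real.log ΔG + Real.log (t₂ - t₁) ≤ K₂ := le_max_left _ _
      have h3 : W x = Real.log (t₂ - t₁) - Real.log (t₂ - x) := rfl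
      linarith
    have hlb : -(K₂ + W x) ≤ Real.log ((G t₂ - G x) / ΔG) := by
      have h1 : Real.log (ε * (t₂ - x)) ≤ Real.log (G t₂ - G x) :=
        Real.log_le_log (by positivity) (hεb x ⟨hx.1.le, hx.2⟩)
      rw [Real.log_mul hε.ne' htx.ne'] at h1
      rw [Real.log_div hux.ne' hΔG.ne']
      have h3 : Real.log ΔG - Real.log ε - Real.log (t₂ - t₁) ≤ K₂ := le_max_right _ _
      have h4 : W x = Real.log (t₂ - t₁) - Real.log (t₂ - x) := rfl
      linarith
    exact abs_le.2 ⟨hlb, hub⟩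
  -- dominating function
  have hfW2 : IntegrableOn (fun x => f x * W x) (Ioo t₁ t₂) := hfW.mono_set Ioo_subset_Ioc_self
  have hfint2 : IntegrableOn f (Ioo t₁ t₂) := hfint.mono_set Ioo_subset_Ioc_self
  have hDint : IntegrableOn (fun x => t₂ / ΔF * (f x * (K + W x))) (Ioo t₁ t₂) := by
    have he : (fun x => t₂ / ΔF * (f x * (K + W x)))
        = fun x => (t₂ / ΔF * K) * f x + (t₂ / ΔF) * (f x * W x) := by
      funext x; ring
    rw [he]
    exact (hfint2.const_mul _).add (hfW2.const_mul _)
  have hDom : ∀ x ∈ Ioo t₁ t₂, ∀ J v, |Real.log v| ≤ J + W x → J ≤ K → 0 ≤ f x →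
      |x * (f x / ΔF) * Real.log v| ≤ t₂ / ΔF * (f x * (K + W x)) := by
    intro x hx J v hJ hJK hf0
    have hx0 : (0:ℝ) < x := ht₁.trans hx.1
    have hq0 : 0 ≤ x * (f x / ΔF) := by positivity
    have hW0x : 0 ≤ W x := hW0 x ⟨hx.1.le, hx.2⟩
    have h1 : |x * (f x / ΔF) * Real.log v| = x * (f x / ΔF) * |Real.log v| := by
      rw [abs_mul, abs_of_nonneg hq0]
    rw [h1]
    calc x * (f x / ΔF) * |Real.log v|
        ≤ t₂ * (f x / ΔF) * (K + W x) := by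
          apply mul_le_mul
          · apply mul_le_mul_of_nonneg_right hx.2.le (by positivity)
          · exact le_trans hJ (by linarith)
          · exact abs_nonneg _
          · positivity
      _ = t₂ / ΔF * (f x * (K + W x)) := by ring
  have hAmeas : Measurable (fun x => x * (f x / ΔF) * Real.log (g x / ΔG)) :=
    (measurable_id.mul (hfm.div_const ΔF)).mul (Real.measurable_log.comp (hgm.div_const ΔG))
  have hBmeas : Measurable (fun x => x * f x / ΔF * Real.log ((G t₂ - G x) / ΔG)) :=
    ((measurable_id.mul hfm).div_const ΔF).mul
      (Real.measurable_log.comp (((measurable_const.sub hGcont.measurable)).div_const ΔG))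
  have hAint : IntervalIntegrable (fun x => x * (f x / ΔF) * Real.log (g x / ΔG)) volume t₁ t₂ := by
    rw [intervalIntegrable_iff_integrableOn_Ioc_of_le ht.le, integrableOn_Ioc_iff_integrableOn_Ioo]
    apply Integrable.mono' hDint (hAmeas.aestronglyMeasurable.restrict)
    rw [ae_restrict_iff' measurableSet_Ioo]
    apply ae_of_all
    intro x hx
    rw [Real.norm_eq_abs]
    exact hDom x hx K₁ (g x / ΔG) (hlog_g x hx) hK₁K (hfpos x)
  have hBint : IntervalIntegrable (fun x => x * f x / ΔF * Real.log ((G t₂ - G x) / ΔG)) volume t₁ t₂ := by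
    rw [intervalIntegrable_iff_integrableOn_Ioc_of_le ht.le, integrableOn_Ioc_iff_integrableOn_Ioo]
    apply Integrable.mono' hDint (hBmeas.aestronglyMeasurable.restrict)
    rw [ae_restrict_iff' measurableSet_Ioo]
    apply ae_of_all
    intro x hx
    rw [Real.norm_eq_abs]
    have he : x * f x / ΔF * Real.log ((G t₂ - G x) / ΔG)
        = x * (f x / ΔF) * Real.log ((G t₂ - G x) / ΔG) := by ring
    rw [he]
    exact hDom x hx K₂ ((G t₂ - G x) / ΔG) (hlog_u x hx) hK₂K (hfpos x)
  have hxfint : IntervalIntegrable (fun x => x * f x) volume t₁ t₂ := by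
    rw [intervalIntegrable_iff_integrableOn_Ioc_of_le ht.le]
    have := IntegrableOn.continuousOn_mul (g := fun x : ℝ => x) (K := Icc t₁ t₂)
      continuousOn_id ((integrableOn_Icc_iff_integrableOn_Ioc (by finiteness)).2 hfint) isCompact_Icc
    exact this.mono_set Ioc_subset_Icc_self
  -- final assembly
  simp only [wInacc, gcm, gfr₁]
  rw [← hΔF_def, ← hΔG_def, ← hc_def]
  have hsum : (∫ x in t₁..t₂, x * f x) / ΔF * Real.log c
        + (∫ x in t₁..t₂, x * f x / ΔF * Real.log ((G t₂ - G x) / ΔG))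
      ≤ ∫ x in t₁..t₂, x * (f x / ΔF) * Real.log (g x / ΔG) := by
    have e1 : (∫ x in t₁..t₂, x * f x) / ΔF * Real.log c
        = ∫ x in t₁..t₂, x * f x * (Real.log c / ΔF) := by
      rw [intervalIntegral.integral_mul_const]; ring
    rw [e1, ← intervalIntegral.integral_add (hxfint.mul_const _) hBint]
    apply intervalIntegral.integral_mono_ae_restrict ht.le
      ((hxfint.mul_const _).add hBint) hAint
    rw [← Measure.restrict_congr_set Ioo_ae_eq_Icc]
    rw [Filter.EventuallyLE, ae_restrict_iff' measurableSet_Ioo]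
    apply ae_of_all
    intro x hx
    have hx0 : (0:ℝ) < x := ht₁.trans hx.1
    have hq : (0:ℝ) ≤ x * f x / ΔF := by
      have := hfpos x; positivity
    have hux : 0 < G t₂ - G x := hu_pos x ⟨hx.1.le, hx.2⟩
    have hgx : 0 < g x := hgpos x hx0
    have hcux : c * (G t₂ - G x) ≤ g x := hcu x ⟨hx.1.le, hx.2⟩
    have e2 : x * f x * (Real.log c / ΔF) + x * f x / ΔF * Real.log ((G t₂ - G x) / ΔG)
        = x * f x / ΔF * Real.log (c * ((G t₂ - G x) / ΔG)) := by
      rw [Real.log_mul hc.ne' (by positivity)]; ring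
    have e3 : x * (f x / ΔF) * Real.log (g x / ΔG)
        = x * f x / ΔF * Real.log (g x / ΔG) := by ring
    show x * f x * (Real.log c / ΔF) + x * f x / ΔF * Real.log ((G t₂ - G x) / ΔG)
        ≤ x * (f x / ΔF) * Real.log (g x / ΔG)
    rw [e2, e3]
    apply mul_le_mul_of_nonneg_left _ hq
    apply Real.log_le_log (by positivity)
    calc c * ((G t₂ - G x) / ΔG) = c * (G t₂ - G x) / ΔG := by ring
      _ ≤ g x / ΔG := by gcongr
  linarith
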